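/- The element r = E⊗N + N⊗E - 2Ψ⁺⊗Ψ⁻ of gl(1|1)⊗gl(1|1) satisfies the classical Yang–Baxter equation [r¹²,r¹³] + [r¹²,r²³] + [r¹³,r²³] = 0, where brackets and tensor leg embeddings are taken in the graded (super) sense. -/
import Mathlib


open Matrix

noncomputable section

/-- The generators `E, N, Ψ⁺, Ψ⁻` of `gl(1|1)` in the defining representation
on `ℝ^{1|1}`, where the basis vector `e₀` is even and `e₁` is odd. -/
def Em : Matrix (Fin 2) (Fin 2) ℝ := !![1, 0; 0, 1]
def Nm : Matrix (Fin 2) (Fin 2) ℝ := !![(1:ℝ)/2, 0; 0, -(1/2)]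
def Pp : Matrix (Fin 2) (Fin 2) ℝ := !![0, 1; 0, 0]
def Pm : Matrix (Fin 2) (Fin 2) ℝ := !![0, 0; 1, 0]

/-- The operator `X⊗Y⊗1` on `(ℝ^{1|1})^{⊗3}` with the Koszul sign
`(-1)^{|Y||u|}` for `Y` of parity `q` passing the first tensor factor. -/
def leg12 (X Y : Matrix (Fin 2) (Fin 2) ℝ) (q : ℕ) :
    Matrix (Fin 2 × Fin 2 × Fin 2) (Fin 2 × Fin 2 × Fin 2) ℝ :=
  Matrix.of fun u v =>
    (-1 : ℝ) ^ (q * (v.1 : ℕ)) * X u.1 v.1 * Y u.2.1 v.2.1 *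
      (if u.2.2 = v.2.2 then 1 else 0)

/-- The operator `X⊗1⊗Y` with the Koszul sign `(-1)^{|Y|(|u|+|v|)}`. -/
def leg13 (X Y : Matrix (Fin 2) (Fin 2) ℝ) (q : ℕ) :
    Matrix (Fin 2 × Fin 2 × Fin 2) (Fin 2 × Fin 2 × Fin 2) ℝ :=
  Matrix.of fun u v =>
    (-1 : ℝ) ^ (q * ((v.1 : ℕ) + (v.2.1 : ℕ))) * X u.1 v.1 *
      (if u.2.1 = v.2.1 then 1 else 0) * Y u.2.2 v.2.2

/-- The operator `1⊗X⊗Y` with the Koszul signs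
`(-1)^{|X||u| + |Y|(|u|+|v|)}`. -/
def leg23 (X Y : Matrix (Fin 2) (Fin 2) ℝ) (p q : ℕ) :
    Matrix (Fin 2 × Fin 2 × Fin 2) (Fin 2 × Fin 2 × Fin 2) ℝ :=
  Matrix.of fun u v =>
    (-1 : ℝ) ^ (p * (v.1 : ℕ) + q * ((v.1 : ℕ) + (v.2.1 : ℕ))) *
      (if u.1 = v.1 then 1 else 0) * X u.2.1 v.2.1 * Y u.2.2 v.2.2

/-- The three tensor-leg embeddings of `r = E⊗N + N⊗E - 2Ψ⁺⊗Ψ⁻`. -/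
def r12 : Matrix (Fin 2 × Fin 2 × Fin 2) (Fin 2 × Fin 2 × Fin 2) ℝ :=
  leg12 Em Nm 0 + leg12 Nm Em 0 - (2 : ℝ) • leg12 Pp Pm 1
def r13 : Matrix (Fin 2 × Fin 2 × Fin 2) (Fin 2 × Fin 2 × Fin 2) ℝ :=
  leg13 Em Nm 0 + leg13 Nm Em 0 - (2 : ℝ) • leg13 Pp Pm 1
def r23 : Matrix (Fin 2 × Fin 2 × Fin 2) (Fin 2 × Fin 2 × Fin 2) ℝ :=
  leg23 Em Nm 0 0 + leg23 Nm Em 0 0 - (2 : ℝ) • leg23 Pp Pm 1 1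

set_option maxHeartbeats 4000000 in
/-- the element `r = E⊗N + N⊗E - 2Ψ⁺⊗Ψ⁻` satisfies the
classical Yang–Baxter equation `[r¹²,r¹³] + [r¹²,r²³] + [r¹³,r²³] = 0`
(verified in the threefold tensor power of the defining representation,
with Koszul signs; since `r` is even, the brackets are ordinary commutators). -/
theorem gl11_CYBE :
    (r12 * r13 - r13 * r12) + (r12 * r23 - r23 * r12) +
      (r13 * r23 - r23 * r13) = 0 := by
  ext ⟨a,b,c⟩ ⟨d,e,f⟩
  simp only [r12, r13, r23, leg12, leg13, leg23, Em, Nm, Pp, Pm, Matrix.mul_apply,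
    Matrix.add_apply, Matrix.sub_apply, Matrix.smul_apply, Matrix.of_apply, Matrix.zero_apply,
    Fintype.sum_prod_type, Fin.sum_univ_two, smul_eq_mul]
  fin_cases a <;> fin_cases b <;> fin_cases c <;> fin_cases d <;> fin_cases e <;> fin_cases f <;>
    norm_num [Matrix.cons_val_zero, Matrix.cons_val_one, Matrix.head_cons]
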